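/- Let T, S : ℝⁿ → ℝⁿ be nonzero linear maps. If the Lie algebras g_T and g_S are isomorphic, then S ∈ C(T) \ {0}, i.e., there exist a nonzero scalar λ ∈ ℝ and an invertible linear map A : ℝⁿ → ℝⁿ such that S = λ·A T A⁻¹. -/

import Mathlib

open Filter Topology

/-- `bg₀` (a bracket on `W`) is a contraction of `bg` (a bracket on `V`). -/
def IsContractionOf {V W : Type*} [AddCommGroup V] [Module ℝ V]
    [AddCommGroup W] [Module ℝ W] [TopologicalSpace W]
    (bg : V → V → V) (bg₀ : W → W → W) : Prop :=
  ∃ I : Set ℝ, (𝓝[I \ {0}] (0 : ℝ)).NeBot ∧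
    ∃ C : ℝ → (W ≃ₗ[ℝ] V), ∀ x y : W,
      Tendsto (fun r => (C r).symm (bg (C r x) (C r y))) (𝓝[I \ {0}] (0 : ℝ)) (𝓝 (bg₀ x y))

/-- The bracket of the semidirect product Lie algebra `g_T = ℝ ⋉_T ℝⁿ`:
`[(a, v), (b, w)] = (0, a • T w - b • T v)`. -/
noncomputable def gTBracket {n : ℕ} (T : Matrix (Fin n) (Fin n) ℝ) :
    (ℝ × (Fin n → ℝ)) → (ℝ × (Fin n → ℝ)) → (ℝ × (Fin n → ℝ)) :=
  fun x y => (0, x.1 • T.mulVec y.2 - y.1 • T.mulVec x.2)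

/-- The similarity orbit `S(T) = {A T A⁻¹ : A ∈ GL(n, ℝ)}`. -/
def simOrbit {n : ℕ} (T : Matrix (Fin n) (Fin n) ℝ) : Set (Matrix (Fin n) (Fin n) ℝ) :=
  {S | ∃ A : Matrix (Fin n) (Fin n) ℝ, IsUnit A ∧ S = A * T * A⁻¹}

/-- The double cone `C(T) = ⋃_{λ ∈ ℝ} λ • S(T)` generated by the similarity orbit. -/
def doubleCone {n : ℕ} (T : Matrix (Fin n) (Fin n) ℝ) : Set (Matrix (Fin n) (Fin n) ℝ) :=
  {S | ∃ lam : ℝ, ∃ X ∈ simOrbit T, S = lam • X}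

/-- The two brackets are isomorphic as Lie algebras: there is an invertible linear map
intertwining them. -/
def BracketIso {V W : Type*} [AddCommGroup V] [Module ℝ V] [AddCommGroup W] [Module ℝ W]
    (bv : V → V → V) (bw : W → W → W) : Prop :=
  ∃ D : V ≃ₗ[ℝ] W, ∀ x y : V, D (bv x y) = bw (D x) (D y)


section AuxiliaryLemmas

open Matrix Module

set_option maxHeartbeats 1000000
set_option synthInstance.maxHeartbeats 400000

set_option maxHeartbeats 1000000
set_option synthInstance.maxHeartbeats 400000

noncomputable def split3 {V : Type*} [AddCommGroup V] [Module ℝ V]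
    (φ ξ : V →ₗ[ℝ] ℝ) (b p : V) (hb : φ b = 1) (hξb : ξ b = 0)
    (hφp : φ p = 0) (hξp : ξ p = 1) :
    V ≃ₗ[ℝ] ℝ × ℝ × ↥(LinearMap.ker φ ⊓ LinearMap.ker ξ) where
  toFun x := (φ x, ξ x, ⟨x - φ x • b - ξ x • p, by
    constructor
    · simp [LinearMap.mem_ker, hb, hφp]
    · simp [LinearMap.mem_ker, hξb, hξp]⟩)
  map_add' x y := by
    refine Prod.ext (by simp) (Prod.ext (by simp) (Subtype.ext ?_))
    simp [add_smul]; abel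
  map_smul' a x := by
    refine Prod.ext (by simp) (Prod.ext (by simp) (Subtype.ext ?_))
    simp [smul_sub, smul_smul]
  invFun ack := ack.1 • b + ack.2.1 • p + (ack.2.2 : V)
  left_inv x := by simp
  right_inv ack := by
    obtain ⟨hk1, hk2⟩ := ack.2.2.2
    rw [SetLike.mem_coe, LinearMap.mem_ker] at hk1 hk2
    refine Prod.ext (by simp [hb, hφp, hk1]) (Prod.ext (by simp [hξb, hξp, hk2]) (Subtype.ext ?_))
    simp [hb, hφp, hξb, hξp, hk1, hk2]
    abel

lemma split3_apply {V : Type*} [AddCommGroup V] [Module ℝ V]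
    (φ ξ : V →ₗ[ℝ] ℝ) (b p : V) (hb : φ b = 1) (hξb : ξ b = 0)
    (hφp : φ p = 0) (hξp : ξ p = 1) (x : V) :
    split3 φ ξ b p hb hξb hφp hξp x =
      (φ x, ξ x, ⟨x - φ x • b - ξ x • p, ((split3 φ ξ b p hb hξb hφp hξp x).2.2).2⟩) := rfl

lemma split3_symm_apply {V : Type*} [AddCommGroup V] [Module ℝ V]
    (φ ξ : V →ₗ[ℝ] ℝ) (b p : V) (hb : φ b = 1) (hξb : ξ b = 0)
    (hφp : φ p = 0) (hξp : ξ p = 1) (ack : ℝ × ℝ × ↥(LinearMap.ker φ ⊓ LinearMap.ker ξ)) :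
    (split3 φ ξ b p hb hξb hφp hξp).symm ack = ack.1 • b + ack.2.1 • p + (ack.2.2 : V) := rfl

noncomputable def dotL {n : ℕ} (p : Fin n → ℝ) : (Fin n → ℝ) →ₗ[ℝ] ℝ where
  toFun x := p ⬝ᵥ x
  map_add' x y := by simp [dotProduct_add]
  map_smul' a x := by simp

lemma key_equiv {n : ℕ} (φ φ' : (Fin n → ℝ) →ₗ[ℝ] ℝ) (p q : Fin n → ℝ)
    (hφ : φ ≠ 0) (hφ' : φ' ≠ 0) (hp : p ≠ 0) (hq : q ≠ 0)
    (hφp : φ p = 0) (hφq : φ' q = 0) :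
    ∃ e : (Fin n → ℝ) ≃ₗ[ℝ] (Fin n → ℝ), e p = q ∧ ∀ x, φ' (e x) = φ x := by
  classical
  obtain ⟨v, hv⟩ : ∃ v, φ v ≠ 0 := by
    by_contra hcon; push_neg at hcon; exact hφ (LinearMap.ext fun x => by simp [hcon])
  obtain ⟨v', hv'⟩ : ∃ v, φ' v ≠ 0 := by
    by_contra hcon; push_neg at hcon; exact hφ' (LinearMap.ext fun x => by simp [hcon])
  have hb : φ ((φ v)⁻¹ • v) = 1 := by simp [inv_mul_cancel₀ hv]
  have hb' : φ' ((φ' v')⁻¹ • v') = 1 := by simp [inv_mul_cancel₀ hv']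
  set b : Fin n → ℝ := (φ v)⁻¹ • v
  set b' : Fin n → ℝ := (φ' v')⁻¹ • v'
  have hpp : p ⬝ᵥ p ≠ 0 := fun hcon => hp (dotProduct_self_eq_zero.mp hcon)
  have hqq : q ⬝ᵥ q ≠ 0 := fun hcon => hq (dotProduct_self_eq_zero.mp hcon)
  set ξ : (Fin n → ℝ) →ₗ[ℝ] ℝ :=
    (p ⬝ᵥ p)⁻¹ • dotL p - (((p ⬝ᵥ p)⁻¹ • dotL p) b) • φ with hξdef
  set ξ' : (Fin n → ℝ) →ₗ[ℝ] ℝ :=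
    (q ⬝ᵥ q)⁻¹ • dotL q - (((q ⬝ᵥ q)⁻¹ • dotL q) b') • φ' with hξ'def
  have hξp : ξ p = 1 := by
    simp [hξdef, dotL, hφp, inv_mul_cancel₀ hpp]
  have hξb : ξ b = 0 := by
    simp [hξdef, dotL, hb]
  have hξq : ξ' q = 1 := by
    simp [hξ'def, dotL, hφq, inv_mul_cancel₀ hqq]
  have hξb' : ξ' b' = 0 := by
    simp [hξ'def, dotL, hb']
  let S3 := split3 φ ξ b p hb hξb hφp hξp
  let S3' := split3 φ' ξ' b' q hb' hξb' hφq hξq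
  have hrank : finrank ℝ ↥(LinearMap.ker φ ⊓ LinearMap.ker ξ)
      = finrank ℝ ↥(LinearMap.ker φ' ⊓ LinearMap.ker ξ') := by
    have h1 := S3.finrank_eq
    have h2 := S3'.finrank_eq
    rw [Module.finrank_prod, Module.finrank_prod, Module.finrank_self] at h1 h2
    omega
  let W := (FiniteDimensional.nonempty_linearEquiv_of_finrank_eq hrank).some
  let e : (Fin n → ℝ) ≃ₗ[ℝ] (Fin n → ℝ) :=
    S3.trans (((LinearEquiv.refl ℝ ℝ).prodCongr ((LinearEquiv.refl ℝ ℝ).prodCongr W)).trans S3'.symm)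
  have heval : ∀ x, e x = (φ x) • b' + (ξ x) • q + ((W (S3 x).2.2 : _) : Fin n → ℝ) := by
    intro x
    show S3'.symm ((LinearEquiv.refl ℝ ℝ) (S3 x).1, (LinearEquiv.refl ℝ ℝ) (S3 x).2.1,
      W (S3 x).2.2) = _
    rw [split3_symm_apply]
    rfl
  refine ⟨e, ?_, ?_⟩
  · have h0 : (S3 p).2.2 = 0 := by
      refine Subtype.ext ?_
      show p - φ p • b - ξ p • p = _
      rw [hφp, hξp, zero_smul, sub_zero, one_smul, sub_self]; rfl
    rw [heval, hφp, hξp, h0, map_zero]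
    simp
  · intro x
    rw [heval]
    have hker : φ' ((W (S3 x).2.2 : _) : Fin n → ℝ) = 0 :=
      ((W (S3 x).2.2).2.1 : _)
    have hq0 : φ' q = 0 := hφq
    simp [hb', hker, hq0]


lemma matrix_eq_of_mulVec {n : ℕ} {M N : Matrix (Fin n) (Fin n) ℝ}
    (h : ∀ v, M.mulVec v = N.mulVec v) : M = N := by
  have h2 : Matrix.toLin' M = Matrix.toLin' N :=
    LinearMap.ext fun v => by simpa [Matrix.toLin'_apply] using h v
  exact Matrix.toLin'.injective h2

lemma case_fzero {n : ℕ} (T S : Matrix (Fin n) (Fin n) ℝ)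
    (D : (ℝ × (Fin n → ℝ)) ≃ₗ[ℝ] (ℝ × (Fin n → ℝ)))
    (hD : ∀ x y, D (gTBracket T x y) = gTBracket S (D x) (D y))
    (hf : ∀ v, (D (0, v)).1 = 0) :
    ∃ (lam : ℝ) (A : Matrix (Fin n) (Fin n) ℝ),
      lam ≠ 0 ∧ IsUnit A ∧ S = lam • (A * T * A⁻¹) := by
  classical
  set α := (D (1, 0)).1 with hαdef
  let g : (Fin n → ℝ) →ₗ[ℝ] (Fin n → ℝ) :=
    (LinearMap.snd ℝ ℝ (Fin n → ℝ)) ∘ₗ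
      ((D : (ℝ × (Fin n → ℝ)) →ₗ[ℝ] (ℝ × (Fin n → ℝ))) ∘ₗ LinearMap.inr ℝ ℝ (Fin n → ℝ))
  have hg : ∀ v, g v = (D (0, v)).2 := fun v => rfl
  have hDv : ∀ v, D (0, v) = (0, g v) := fun v => Prod.ext (hf v) (hg v).symm
  have hfirst : ∀ y : ℝ × (Fin n → ℝ), (D y).1 = y.1 * α := by
    intro y
    have hy : y = y.1 • ((1 : ℝ), (0 : Fin n → ℝ)) + (0, y.2) := by
      refine Prod.ext (by simp) (by simp)
    rw [hy, map_add, _root_.map_smul]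
    show (y.1 • D (1, 0)).1 + (D (0, y.2)).1 = _
    rw [hf]
    simp [hαdef]
  have hα : α ≠ 0 := by
    intro h0
    obtain ⟨x, hx⟩ := D.surjective ((1 : ℝ), (0 : Fin n → ℝ))
    have h1 : (1 : ℝ) = x.1 * α := by
      have := hfirst x
      rw [hx] at this
      exact this
    rw [h0, mul_zero] at h1
    exact one_ne_zero h1
  have hgT : ∀ w, g (T.mulVec w) = α • S.mulVec (g w) := by
    intro w
    have h := hD ((1 : ℝ), (0 : Fin n → ℝ)) ((0 : ℝ), w)
    have hl : gTBracket T ((1 : ℝ), (0 : Fin n → ℝ)) ((0 : ℝ), w) = (0, T.mulVec w) := by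
      simp [gTBracket]
    rw [hl, hDv w] at h
    have h2 := congrArg Prod.snd h
    simp only [hDv] at h2
    rw [hg] at h2
    rw [hg, h2]
    simp [gTBracket, ← hαdef]
  -- g bijective
  have hginj : Function.Injective g := by
    intro a b hab
    have h1 : D (0, a) = D (0, b) := by rw [hDv, hDv, hab]
    have := D.injective h1
    exact congrArg Prod.snd this
  have hgsurj : Function.Surjective g := LinearMap.injective_iff_surjective.mp hginj
  let eg := LinearEquiv.ofBijective g ⟨hginj, hgsurj⟩
  set G := LinearMap.toMatrix' g with hGdef
  set B := LinearMap.toMatrix' (eg.symm : (Fin n → ℝ) →ₗ[ℝ] (Fin n → ℝ)) with hBdef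
  have hcomp1 : g ∘ₗ (eg.symm : (Fin n → ℝ) →ₗ[ℝ] (Fin n → ℝ)) = LinearMap.id :=
    LinearMap.ext fun x => eg.apply_symm_apply x
  have hcomp2 : (eg.symm : (Fin n → ℝ) →ₗ[ℝ] (Fin n → ℝ)) ∘ₗ g = LinearMap.id :=
    LinearMap.ext fun x => eg.symm_apply_apply x
  have hGB : G * B = 1 := by
    rw [hGdef, hBdef, ← LinearMap.toMatrix'_comp, hcomp1, LinearMap.toMatrix'_id]
  have hBG : B * G = 1 := by
    rw [hGdef, hBdef, ← LinearMap.toMatrix'_comp, hcomp2, LinearMap.toMatrix'_id]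
  have hunit : IsUnit G := ⟨⟨G, B, hGB, hBG⟩, rfl⟩
  have hGinv : G⁻¹ = B := inv_eq_right_inv hGB
  have hGv : ∀ x, G.mulVec x = g x := fun x => by
    rw [hGdef, ← Matrix.toLin'_apply, Matrix.toLin'_toMatrix']
  have hBv : ∀ x, B.mulVec x = eg.symm x := fun x => by
    rw [hBdef, ← Matrix.toLin'_apply, Matrix.toLin'_toMatrix']; rfl
  have hGT : G * T = α • (S * G) := by
    apply matrix_eq_of_mulVec
    intro w
    rw [← mulVec_mulVec, hGv, hgT, smul_mulVec, ← mulVec_mulVec, hGv]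
  refine ⟨α⁻¹, G, inv_ne_zero hα, hunit, ?_⟩
  rw [hGinv]
  have hfin : G * T * B = α • S := by
    rw [hGT, Matrix.smul_mul, Matrix.mul_assoc, hGB, Matrix.mul_one]
  rw [hfin, smul_smul, inv_mul_cancel₀ hα, one_smul]

lemma rank_one_aux {n : ℕ} (T S : Matrix (Fin n) (Fin n) ℝ)
    (D : (ℝ × (Fin n → ℝ)) ≃ₗ[ℝ] (ℝ × (Fin n → ℝ)))
    (hD : ∀ x y, D (gTBracket T x y) = gTBracket S (D x) (D y))
    (hf : ¬ ∀ v, (D (0, v)).1 = 0) (hT : T ≠ 0) :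
    ∃ p : Fin n → ℝ, p ≠ 0 ∧ (D (0, p)).1 = 0 ∧
      ∀ w, T.mulVec w = (D (0, w)).1 • p := by
  classical
  set α := (D (1, 0)).1 with hαdef
  set u := (D (1, 0)).2 with hudef
  push_neg at hf
  obtain ⟨w₁, hw₁⟩ := hf
  let f : (Fin n → ℝ) →ₗ[ℝ] ℝ :=
    (LinearMap.fst ℝ ℝ (Fin n → ℝ)) ∘ₗ
      ((D : (ℝ × (Fin n → ℝ)) →ₗ[ℝ] (ℝ × (Fin n → ℝ))) ∘ₗ LinearMap.inr ℝ ℝ (Fin n → ℝ))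
  have hfv : ∀ v, f v = (D (0, v)).1 := fun v => rfl
  let g : (Fin n → ℝ) →ₗ[ℝ] (Fin n → ℝ) :=
    (LinearMap.snd ℝ ℝ (Fin n → ℝ)) ∘ₗ
      ((D : (ℝ × (Fin n → ℝ)) →ₗ[ℝ] (ℝ × (Fin n → ℝ))) ∘ₗ LinearMap.inr ℝ ℝ (Fin n → ℝ))
  have hgv : ∀ v, g v = (D (0, v)).2 := fun v => rfl
  have hDv : ∀ v, D (0, v) = (f v, g v) := fun v => rfl
  set w₀ : Fin n → ℝ := ((D (0, w₁)).1)⁻¹ • w₁ with hw₀def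
  have hfw₀ : f w₀ = 1 := by
    rw [hw₀def, _root_.map_smul, smul_eq_mul, hfv]
    exact inv_mul_cancel₀ hw₁
  -- R1 and R2
  have hR12 : ∀ w, D (0, T.mulVec w) =
      (0, α • S.mulVec (g w) - f w • S.mulVec u) := by
    intro w
    have h := hD ((1 : ℝ), (0 : Fin n → ℝ)) ((0 : ℝ), w)
    have hl : gTBracket T ((1 : ℝ), (0 : Fin n → ℝ)) ((0 : ℝ), w) = (0, T.mulVec w) := by
      simp [gTBracket]
    rw [hl] at h
    rw [h, hDv w]
    simp [gTBracket, hαdef, hudef]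
  have hR1 : ∀ w, f (T.mulVec w) = 0 := by
    intro w
    rw [hfv, hR12 w]
  have hR2 : ∀ w, g (T.mulVec w) = α • S.mulVec (g w) - f w • S.mulVec u := by
    intro w
    rw [hgv, hR12 w]
  -- R3
  set z := S.mulVec (g w₀) with hzdef
  have hR3 : ∀ v, S.mulVec (g v) = f v • z := by
    intro v
    have h := hD ((0 : ℝ), v) ((0 : ℝ), w₀)
    have hl : gTBracket T ((0 : ℝ), v) ((0 : ℝ), w₀) = 0 := by
      simp [gTBracket]
    rw [hl, map_zero] at h
    have h2 := congrArg Prod.snd h.symm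
    simp only [gTBracket, hDv] at h2
    rw [hfw₀, one_smul] at h2
    have h3 : f v • S.mulVec (g w₀) - S.mulVec (g v) = 0 := h2
    rw [sub_eq_zero] at h3
    rw [← h3, hzdef]
  set c := α • z - S.mulVec u with hcdef
  have hgT : ∀ w, g (T.mulVec w) = f w • c := by
    intro w
    rw [hR2 w, hR3 w, hcdef, smul_sub, smul_comm α (f w) z]
  set p := (D.symm (0, c)).2 with hpdef
  have hTw : ∀ w, T.mulVec w = f w • p := by
    intro w
    have h1 : D (0, T.mulVec w) = (0, f w • c) := by
      rw [hDv, hR1 w, hgT w]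
    have h2 : ((0 : ℝ), T.mulVec w) = D.symm (0, f w • c) := by
      rw [← h1, D.symm_apply_apply]
    have h3 : ((0 : ℝ), f w • c) = f w • ((0 : ℝ), c) := by
      refine Prod.ext (by simp) (by simp)
    rw [h3, _root_.map_smul] at h2
    have h4 := congrArg Prod.snd h2
    rw [hpdef]
    simpa using h4
  have hp0 : p ≠ 0 := by
    intro hcon
    apply hT
    apply matrix_eq_of_mulVec
    intro v
    rw [hTw v, hcon, smul_zero, Matrix.zero_mulVec]
  have hfp : f p = 0 := by
    have h1 := hR1 w₀
    rw [hTw w₀, hfw₀, one_smul] at h1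
    exact h1
  exact ⟨p, hp0, hfp, fun w => by rw [hTw w, hfv]⟩

end AuxiliaryLemmas

open Matrix in
/-- If `T, S ≠ 0` and the Lie algebras `g_T` and `g_S` are isomorphic, then
`S ∈ C(T) \ {0}`: there are `λ ≠ 0` and an invertible `A` with `S = λ • A T A⁻¹`. -/
theorem mem_doubleCone_of_bracketIso {n : ℕ} (T S : Matrix (Fin n) (Fin n) ℝ)
    (hT : T ≠ 0) (hS : S ≠ 0) (h : BracketIso (gTBracket T) (gTBracket S)) :
    ∃ (lam : ℝ) (A : Matrix (Fin n) (Fin n) ℝ),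
      lam ≠ 0 ∧ IsUnit A ∧ S = lam • (A * T * A⁻¹) := by
  classical
  obtain ⟨D, hD⟩ := h
  have hDsymm : ∀ x y, D.symm (gTBracket S x y) = gTBracket T (D.symm x) (D.symm y) := by
    intro x y
    apply D.injective
    rw [D.apply_symm_apply, hD, D.apply_symm_apply, D.apply_symm_apply]
  by_cases hf : ∀ v, (D (0, v)).1 = 0
  · exact case_fzero T S D hD hf
  by_cases hf' : ∀ v, (D.symm (0, v)).1 = 0
  · obtain ⟨lam, A, hlam, hA, hTeq⟩ := case_fzero S T D.symm hDsymm hf'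
    have hdet : IsUnit A.det := (Matrix.isUnit_iff_isUnit_det A).mp hA
    have hAA : A⁻¹ * A = 1 := Matrix.nonsing_inv_mul A hdet
    refine ⟨lam⁻¹, A⁻¹, inv_ne_zero hlam, ?_, ?_⟩
    · rw [Matrix.isUnit_iff_isUnit_det]
      exact Matrix.isUnit_nonsing_inv_det_iff.mpr hdet
    · rw [Matrix.nonsing_inv_nonsing_inv A hdet, hTeq]
      rw [Matrix.mul_smul, Matrix.smul_mul, smul_smul, inv_mul_cancel₀ hlam, one_smul]
      have h1 : A⁻¹ * (A * S * A⁻¹) * A = A⁻¹ * A * S * (A⁻¹ * A) := by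
        simp only [Matrix.mul_assoc]
      rw [h1, hAA, Matrix.one_mul, Matrix.mul_one]
  · obtain ⟨p, hp0, hfp, hTw⟩ := rank_one_aux T S D hD hf hT
    obtain ⟨q, hq0, hf'q, hSw⟩ := rank_one_aux S T D.symm hDsymm hf' hS
    let φ : (Fin n → ℝ) →ₗ[ℝ] ℝ :=
      (LinearMap.fst ℝ ℝ (Fin n → ℝ)) ∘ₗ
        ((D : (ℝ × (Fin n → ℝ)) →ₗ[ℝ] (ℝ × (Fin n → ℝ))) ∘ₗ LinearMap.inr ℝ ℝ (Fin n → ℝ))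
    let φ' : (Fin n → ℝ) →ₗ[ℝ] ℝ :=
      (LinearMap.fst ℝ ℝ (Fin n → ℝ)) ∘ₗ
        ((D.symm : (ℝ × (Fin n → ℝ)) →ₗ[ℝ] (ℝ × (Fin n → ℝ))) ∘ₗ LinearMap.inr ℝ ℝ (Fin n → ℝ))
    have hφv : ∀ v, φ v = (D (0, v)).1 := fun v => rfl
    have hφ'v : ∀ v, φ' v = (D.symm (0, v)).1 := fun v => rfl
    have hφ : φ ≠ 0 := fun hcon => hf fun v => by rw [← hφv v, hcon]; rfl
    have hφ' : φ' ≠ 0 := fun hcon => hf' fun v => by rw [← hφ'v v, hcon]; rfl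
    obtain ⟨e, hep, heφ⟩ := key_equiv φ φ' p q hφ hφ' hp0 hq0
      (by rw [hφv]; exact hfp) (by rw [hφ'v]; exact hf'q)
    set A := LinearMap.toMatrix' (e : (Fin n → ℝ) →ₗ[ℝ] (Fin n → ℝ)) with hAdef
    set B := LinearMap.toMatrix' (e.symm : (Fin n → ℝ) →ₗ[ℝ] (Fin n → ℝ)) with hBdef
    have hAB : A * B = 1 := by
      rw [hAdef, hBdef, ← LinearMap.toMatrix'_comp,
        show (e : (Fin n → ℝ) →ₗ[ℝ] (Fin n → ℝ)) ∘ₗ (e.symm : (Fin n → ℝ) →ₗ[ℝ] (Fin n → ℝ))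
          = LinearMap.id from LinearMap.ext fun x => e.apply_symm_apply x,
        LinearMap.toMatrix'_id]
    have hBA : B * A = 1 := by
      rw [hAdef, hBdef, ← LinearMap.toMatrix'_comp,
        show (e.symm : (Fin n → ℝ) →ₗ[ℝ] (Fin n → ℝ)) ∘ₗ (e : (Fin n → ℝ) →ₗ[ℝ] (Fin n → ℝ))
          = LinearMap.id from LinearMap.ext fun x => e.symm_apply_apply x,
        LinearMap.toMatrix'_id]
    have hunit : IsUnit A := ⟨⟨A, B, hAB, hBA⟩, rfl⟩
    have hAinv : A⁻¹ = B := Matrix.inv_eq_right_inv hAB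
    have hAv : ∀ x, A.mulVec x = e x := fun x => by
      rw [hAdef, ← Matrix.toLin'_apply, Matrix.toLin'_toMatrix']; rfl
    have hBv : ∀ x, B.mulVec x = e.symm x := fun x => by
      rw [hBdef, ← Matrix.toLin'_apply, Matrix.toLin'_toMatrix']; rfl
    refine ⟨1, A, one_ne_zero, hunit, ?_⟩
    rw [one_smul, hAinv]
    apply matrix_eq_of_mulVec
    intro x
    rw [← Matrix.mulVec_mulVec, ← Matrix.mulVec_mulVec, hBv, hTw, hAv, _root_.map_smul, hep,
      hSw x]
    congr 1
    have h2 := heφ (e.symm x)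
    rw [e.apply_symm_apply] at h2
    rw [hφ'v, hφv] at h2
    exact h2
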